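/- arXiv:2501.08082 — 3 statements merged into one kernel-verified Lean document; each statement's English description precedes it below -/
import Mathlib

section
/- Let n ≥ 1 and let 𝓕 be a set of functions f : [n] → [n]. Let G(𝓕) be the HRG with single nonterminal S, single terminal a, type(S) = type(a) = [n], and productions P(𝓕) = {p(f) | f ∈ 𝓕} ∪ {S → a•}. Then L(G(𝓕)) = {F(a,h) | h ∈ ⟨𝓕⟩}, where ⟨𝓕⟩ is the least submonoid of the monoid of all functions [n] → [n] (under composition) containing 𝓕. -/
namespace HRGPaper

universe u

/-- A hypergraph over a `Finset ℕ`-typed alphabet `C` with typing function `tc`. -/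
structure Hypergraph (C : Type u) (tc : C → Finset ℕ) : Type (max u 1) where
  V : Type
  E : Type
  finV : Finite V
  finE : Finite E
  lab : E → C
  att : (e : E) → (σ : ℕ) → σ ∈ tc (lab e) → V
  extType : Finset ℕ
  ext : (σ : ℕ) → σ ∈ extType → V

variable {C : Type u} {tc : C → Finset ℕ}

/-- An isomorphism of hypergraphs. -/
structure HIso (H K : Hypergraph C tc) where
  vE : H.V ≃ K.V
  eE : H.E ≃ K.E
  lab_eq : ∀ e, K.lab (eE e) = H.lab e
  att_eq : ∀ (e : H.E) (σ : ℕ) (h : σ ∈ tc (H.lab e)) (h' : σ ∈ tc (K.lab (eE e))),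
    K.att (eE e) σ h' = vE (H.att e σ h)
  extType_eq : K.extType = H.extType
  ext_eq : ∀ (σ : ℕ) (h : σ ∈ H.extType) (h' : σ ∈ K.extType),
    K.ext σ h' = vE (H.ext σ h)

/-- Two hypergraphs are isomorphic. -/
def IsIso (H K : Hypergraph C tc) : Prop := Nonempty (HIso H K)

/-- The handle `c•` of a label `c`. -/
def handle (c : C) : Hypergraph C tc where
  V := {σ : ℕ // σ ∈ tc c}
  E := PUnit
  finV := inferInstance
  finE := inferInstance
  lab := fun _ => c
  att := fun _ σ h => ⟨σ, h⟩
  extType := tc c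
  ext := fun σ h => ⟨σ, h⟩

/-- The gluing relation used for hyperedge replacement: the attachment node of `e`
with selector `σ` gets identified with the external node of `K` with selector `σ`. -/
def glueRel (H : Hypergraph C tc) (e : H.E) (K : Hypergraph C tc) :
    (H.V ⊕ K.V) → (H.V ⊕ K.V) → Prop := fun x y =>
  ∃ (σ : ℕ) (h : σ ∈ tc (H.lab e)) (h' : σ ∈ K.extType),
    x = Sum.inl (H.att e σ h) ∧ y = Sum.inr (K.ext σ h')

/-- The replacement `H[e/K]` of the hyperedge `e` in `H` by the hypergraph `K`. -/
def replace (H : Hypergraph C tc) (e : H.E) (K : Hypergraph C tc) : Hypergraph C tc where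
  V := Quot (glueRel H e K)
  E := {e' : H.E // e' ≠ e} ⊕ K.E
  finV := by haveI := H.finV; haveI := K.finV; infer_instance
  finE := by haveI := H.finE; haveI := K.finE; infer_instance
  lab := Sum.elim (fun e' => H.lab e'.1) K.lab
  att := fun e' => Sum.rec (motive := fun e' => (σ : ℕ) →
      σ ∈ tc (Sum.elim (fun e'' : {e' : H.E // e' ≠ e} => H.lab e''.1) K.lab e') →
      Quot (glueRel H e K))
    (fun e₀ σ h => Quot.mk _ (Sum.inl (H.att e₀.1 σ h)))
    (fun eK σ h => Quot.mk _ (Sum.inr (K.att eK σ h))) e'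
  extType := H.extType
  ext := fun σ h => Quot.mk _ (Sum.inl (H.ext σ h))

/-- A hyperedge replacement grammar over the typed alphabet `C`; `isNT` singles out the
nonterminal labels, the remaining labels being terminal. -/
structure HRG (C : Type u) (tc : C → Finset ℕ) where
  isNT : C → Prop
  finC : Finite C
  P : Set (C × Hypergraph C tc)
  finP : P.Finite
  lhs_nt : ∀ p ∈ P, isNT p.1
  rhs_type : ∀ p ∈ P, p.2.extType = tc p.1
  S : C
  S_nt : isNT S

/-- One derivation step of an HRG: replace a hyperedge labeled by the left-hand side of a
production with the right-hand side of that production. -/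
def Step (Γ : HRG C tc) (H H' : Hypergraph C tc) : Prop :=
  ∃ (e : H.E) (p : C × Hypergraph C tc), p ∈ Γ.P ∧ H.lab e = p.1 ∧ H' = replace H e p.2

/-- The derivability relation `⇒*` of an HRG. -/
def Derives (Γ : HRG C tc) : Hypergraph C tc → Hypergraph C tc → Prop :=
  Relation.ReflTransGen (Step Γ)

/-- Derivability in exactly `k` steps. -/
inductive DerivesIn (Γ : HRG C tc) : ℕ → Hypergraph C tc → Hypergraph C tc → Prop
  | refl (H : Hypergraph C tc) : DerivesIn Γ 0 H H
  | tail {k H H' H''} : DerivesIn Γ k H H' → Step Γ H' H'' → DerivesIn Γ (k + 1) H H''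

/-- The language of an HRG: all hypergraphs with terminal labels only that are isomorphic to a
hypergraph derivable from the handle of the start symbol (i.e. the language is considered
up to isomorphism). -/
def Lang (Γ : HRG C tc) : Set (Hypergraph C tc) :=
  {H | (∀ e : H.E, ¬ Γ.isNT (H.lab e)) ∧ ∃ H', Derives Γ (handle Γ.S) H' ∧ IsIso H' H}

/-- The string graph of the word `w`. -/
def SG (w : List C) : Hypergraph C tc where
  V := Fin (w.length + 1)
  E := Fin w.length
  finV := inferInstance
  finE := inferInstance
  lab := fun i => w.get i
  att := fun i σ _ => if σ = 1 then i.castSucc else i.succ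
  extType := {1, 2}
  ext := fun σ _ => if σ = 1 then 0 else Fin.last w.length

/-- An HRG is string-generating if every hypergraph of its language is a string graph. -/
def IsStringGenerating (Γ : HRG C tc) : Prop :=
  ∀ H ∈ Lang Γ, ∃ w : List C, IsIso H (SG w)

/-- A hypergraph is repetition-free if its external map and all its attachment maps
are injective. -/
def RepFree (H : Hypergraph C tc) : Prop :=
  (∀ (σ₁ σ₂ : ℕ) (h₁ : σ₁ ∈ H.extType) (h₂ : σ₂ ∈ H.extType),
      H.ext σ₁ h₁ = H.ext σ₂ h₂ → σ₁ = σ₂) ∧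
  (∀ (e : H.E) (σ₁ σ₂ : ℕ) (h₁ : σ₁ ∈ tc (H.lab e)) (h₂ : σ₂ ∈ tc (H.lab e)),
      H.att e σ₁ h₁ = H.att e σ₂ h₂ → σ₁ = σ₂)

/-- An HRG is repetition-free if all right-hand sides of its productions are repetition-free. -/
def RepFreeGrammar (Γ : HRG C tc) : Prop := ∀ p ∈ Γ.P, RepFree p.2

/-- The size of a hypergraph: number of nodes plus number of hyperedges plus the total number
of attachment nodes of its hyperedges. -/
noncomputable def hgSize (D : Hypergraph C tc) : ℕ :=
  Nat.card D.V + Nat.card D.E + Nat.card ((e : D.E) × {σ : ℕ // σ ∈ tc (D.lab e)})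

/-- The size of a production. -/
noncomputable def prodSize (p : C × Hypergraph C tc) : ℕ :=
  (tc p.1).card + hgSize p.2

/-- The size of an HRG. -/
noncomputable def hrgSize (Γ : HRG C tc) : ℕ :=
  ∑ p ∈ Γ.finP.toFinset, prodSize p

/-- The hypergraph `F(X, f)`: nodes `[n] = {1,…,n}`, a single hyperedge labeled `X`
whose attachment node for selector `j` is `f j`, and all nodes external via `ext j = j`. -/
def Fgraph (X : C) (n : ℕ) (hX : tc X = Finset.Icc 1 n) (f : ℕ → ℕ)
    (hf : ∀ j ∈ Finset.Icc 1 n, f j ∈ Finset.Icc 1 n) : Hypergraph C tc where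
  V := {j : ℕ // j ∈ Finset.Icc 1 n}
  E := PUnit
  finV := inferInstanceAs (Finite ↥(Finset.Icc 1 n))
  finE := inferInstance
  lab := fun _ => X
  att := fun _ σ h => ⟨f σ, hf σ (hX ▸ h)⟩
  extType := Finset.Icc 1 n
  ext := fun σ h => ⟨σ, h⟩

/-- A node is external if it is in the range of the external map. -/
def IsExternal (H : Hypergraph C tc) (v : H.V) : Prop :=
  ∃ (σ : ℕ) (h : σ ∈ H.extType), H.ext σ h = v

/-- The HRG `G(𝓕)` over labels `Bool` (with `true` the nonterminal `S` and `false` the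
terminal `a`, both of type `[n]`), with productions `p(f)` for `f ∈ 𝓕` and `S → a•`. -/
def GF (n : ℕ) (F : Set (Function.End ℕ)) (hFfin : F.Finite)
    (hF : ∀ f ∈ F, ∀ j ∈ Finset.Icc 1 n, f j ∈ Finset.Icc 1 n) :
    HRG Bool (fun _ => Finset.Icc 1 n) where
  isNT := fun c => c = true
  finC := inferInstance
  P := ((fun f : {f : Function.End ℕ // ∀ j ∈ Finset.Icc 1 n, f j ∈ Finset.Icc 1 n} =>
          ((true : Bool), Fgraph true n rfl f.1 f.2)) '' {f | f.1 ∈ F})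
        ∪ {((true : Bool), handle false)}
  finP := by
    apply Set.Finite.union
    · apply Set.Finite.image
      exact hFfin.preimage (Set.injOn_of_injective Subtype.val_injective)
    · exact Set.finite_singleton _
  lhs_nt := by
    rintro p (⟨f, -, rfl⟩ | hp)
    · rfl
    · rw [Set.mem_singleton_iff] at hp; rw [hp]
  rhs_type := by
    rintro p (⟨f, -, rfl⟩ | hp)
    · rfl
    · rw [Set.mem_singleton_iff] at hp; rw [hp]; rfl
  S := true
  S_nt := rfl

section Aux

theorem att_congr (H : Hypergraph C tc) {e₁ e₂ : H.E} (he : e₁ = e₂) (σ : ℕ)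
    (h₁ : σ ∈ tc (H.lab e₁)) (h₂ : σ ∈ tc (H.lab e₂)) :
    H.att e₁ σ h₁ = H.att e₂ σ h₂ := by cases he; rfl

def HIso.refl (H : Hypergraph C tc) : HIso H H where
  vE := Equiv.refl _
  eE := Equiv.refl _
  lab_eq := fun _ => rfl
  att_eq := fun _ _ _ _ => rfl
  extType_eq := rfl
  ext_eq := fun _ _ _ => rfl

def HIso.symm {H K : Hypergraph C tc} (φ : HIso H K) : HIso K H where
  vE := φ.vE.symm
  eE := φ.eE.symm
  lab_eq := fun e => by
    have := φ.lab_eq (φ.eE.symm e); rw [Equiv.apply_symm_apply] at this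
    exact this.symm
  att_eq := fun e σ h h' => by
    apply φ.vE.injective
    rw [Equiv.apply_symm_apply]
    have h₂ : σ ∈ tc (K.lab (φ.eE (φ.eE.symm e))) := by
      rwa [Equiv.apply_symm_apply]
    rw [← φ.att_eq (φ.eE.symm e) σ h' h₂]
    exact att_congr K (φ.eE.apply_symm_apply e) σ h₂ h
  extType_eq := φ.extType_eq.symm
  ext_eq := fun σ h h' => by
    apply φ.vE.injective
    rw [Equiv.apply_symm_apply]
    exact (φ.ext_eq σ h' h).symm

def HIso.trans {H K L : Hypergraph C tc} (φ : HIso H K) (ψ : HIso K L) : HIso H L where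
  vE := φ.vE.trans ψ.vE
  eE := φ.eE.trans ψ.eE
  lab_eq := fun e => (ψ.lab_eq (φ.eE e)).trans (φ.lab_eq e)
  att_eq := fun e σ h h' => by
    have h₂ : σ ∈ tc (K.lab (φ.eE e)) := by rw [φ.lab_eq e]; exact h
    show L.att (ψ.eE (φ.eE e)) σ h' = ψ.vE (φ.vE (H.att e σ h))
    rw [ψ.att_eq (φ.eE e) σ h₂ h', φ.att_eq e σ h h₂]
  extType_eq := ψ.extType_eq.trans φ.extType_eq
  ext_eq := fun σ h h' => by
    have h₂ : σ ∈ K.extType := by rw [φ.extType_eq]; exact h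
    show L.ext σ h' = ψ.vE (φ.vE (H.ext σ h))
    rw [ψ.ext_eq σ h₂ h', φ.ext_eq σ h h₂]

end Aux

section Key

variable {n : ℕ}

theorem handle_false_eq :
    (handle false : Hypergraph Bool (fun _ => Finset.Icc 1 n)) =
      Fgraph false n rfl (1 : Function.End ℕ) (fun _ hj => hj) := rfl

theorem handle_true_eq :
    (handle true : Hypergraph Bool (fun _ => Finset.Icc 1 n)) =
      Fgraph true n rfl (1 : Function.End ℕ) (fun _ hj => hj) := rfl

theorem fgraph_edge_eq {X : Bool} {h : ℕ → ℕ}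
    {hh : ∀ j ∈ Finset.Icc 1 n, h j ∈ Finset.Icc 1 n}
    {H : Hypergraph Bool (fun _ => Finset.Icc 1 n)}
    (φ : HIso H (Fgraph X n rfl h hh)) (e₁ e₂ : H.E) : e₁ = e₂ :=
  φ.eE.injective (Subsingleton.elim (α := PUnit) _ _)

/-- The key computation: replacing the unique hyperedge of a hypergraph isomorphic to
`F(X, h)` by `F(Y, g)` yields a hypergraph isomorphic to `F(Y, h ∘ g)`. -/
def keyIso {X Y : Bool} {h g : ℕ → ℕ}
    {hh : ∀ j ∈ Finset.Icc 1 n, h j ∈ Finset.Icc 1 n}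
    {hg : ∀ j ∈ Finset.Icc 1 n, g j ∈ Finset.Icc 1 n}
    {H : Hypergraph Bool (fun _ => Finset.Icc 1 n)}
    (φ : HIso H (Fgraph X n rfl h hh)) (e : H.E) :
    HIso (replace H e (Fgraph Y n rfl g hg))
      (Fgraph Y n rfl (fun j => h (g j)) (fun j hj => hh _ (hg j hj))) where
  vE := {
    toFun := Quot.lift
      (Sum.elim (fun v => φ.vE v) (fun w => ⟨h w.1, hh w.1 w.2⟩))
      (by
        rintro x y ⟨σ, hσ, hσ', rfl, rfl⟩
        exact (φ.att_eq e σ hσ hσ').symm)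
    invFun := fun w => Quot.mk _ (Sum.inl (φ.vE.symm w))
    left_inv := by
      intro x
      induction x using Quot.ind with
      | _ x =>
        cases x with
        | inl v =>
          show Quot.mk _ (Sum.inl (φ.vE.symm (φ.vE v))) = Quot.mk _ (Sum.inl v)
          rw [Equiv.symm_apply_apply]
        | inr w =>
          show Quot.mk _ (Sum.inl (φ.vE.symm ⟨h w.1, hh w.1 w.2⟩)) = Quot.mk _ (Sum.inr w)
          have h1 : φ.vE.symm ⟨h w.1, hh w.1 w.2⟩ = H.att e w.1 w.2 := by
            refine (Equiv.symm_apply_eq _).mpr ?_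
            exact φ.att_eq e w.1 w.2 w.2
          rw [h1]
          exact Quot.sound ⟨w.1, w.2, w.2, rfl, rfl⟩
    right_inv := fun w => φ.vE.apply_symm_apply w }
  eE := {
    toFun := fun _ => PUnit.unit
    invFun := fun _ => Sum.inr PUnit.unit
    left_inv := by
      rintro (⟨e', he'⟩ | ⟨⟩)
      · exact absurd (fgraph_edge_eq φ e' e) he'
      · rfl
    right_inv := fun _ => rfl }
  lab_eq := by
    rintro (⟨e', he'⟩ | u)
    · exact absurd (fgraph_edge_eq φ e' e) he'
    · rfl
  att_eq := by
    rintro (⟨e', he'⟩ | u) σ hσ hσ'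
    · exact absurd (fgraph_edge_eq φ e' e) he'
    · rfl
  extType_eq := φ.extType_eq
  ext_eq := fun σ hσ hσ' => φ.ext_eq σ hσ hσ'

theorem Fgraph_congr {X : Bool} {f₁ f₂ : ℕ → ℕ} (hf : f₁ = f₂)
    {h₁ : ∀ j ∈ Finset.Icc 1 n, f₁ j ∈ Finset.Icc 1 n}
    {h₂ : ∀ j ∈ Finset.Icc 1 n, f₂ j ∈ Finset.Icc 1 n} :
    (Fgraph X n rfl f₁ h₁ : Hypergraph Bool (fun _ => Finset.Icc 1 n)) =
      Fgraph X n rfl f₂ h₂ := by cases hf; rfl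

theorem closure_bound {F : Set (Function.End ℕ)}
    (hF : ∀ f ∈ F, ∀ j ∈ Finset.Icc 1 n, f j ∈ Finset.Icc 1 n)
    {h : Function.End ℕ} (hcl : h ∈ Submonoid.closure F) :
    ∀ j ∈ Finset.Icc 1 n, h j ∈ Finset.Icc 1 n := by
  induction hcl using Submonoid.closure_induction with
  | mem f hf => exact hF f hf
  | one => exact fun j hj => hj
  | mul f g _ _ hf hg => exact fun j hj => hf _ (hg j hj)

theorem derives_inv (F : Set (Function.End ℕ)) (hFfin : F.Finite)
    (hF : ∀ f ∈ F, ∀ j ∈ Finset.Icc 1 n, f j ∈ Finset.Icc 1 n)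
    {H' : Hypergraph Bool (fun _ => Finset.Icc 1 n)}
    (hd : Derives (GF n F hFfin hF) (handle true) H') :
    ∃ h ∈ Submonoid.closure F, ∃ hh : ∀ j ∈ Finset.Icc 1 n, h j ∈ Finset.Icc 1 n,
      (IsIso H' (Fgraph true n rfl h hh) ∨ IsIso H' (Fgraph false n rfl h hh)) := by
  induction hd with
  | refl =>
    refine ⟨1, one_mem _, fun _ hj => hj, Or.inl ?_⟩
    rw [handle_true_eq]
    exact ⟨HIso.refl _⟩
  | tail _ hstep ih =>
    obtain ⟨h, hcl, hh, hiso⟩ := ih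
    obtain ⟨e, p, hp, hlab, rfl⟩ := hstep
    have hp1 : p.1 = true := (GF n F hFfin hF).lhs_nt p hp
    rcases hiso with hiso | hiso
    · obtain ⟨φ⟩ := hiso
      rcases hp with ⟨f, hfF, rfl⟩ | hp
      · exact ⟨h * f.1, mul_mem hcl (Submonoid.subset_closure hfF),
          fun j hj => hh _ (f.2 j hj), Or.inl ⟨keyIso (hg := f.2) φ e⟩⟩
      · rw [Set.mem_singleton_iff] at hp
        subst hp
        refine ⟨h, hcl, hh, Or.inr ?_⟩
        rw [handle_false_eq]
        exact ⟨keyIso (hg := fun _ hj => hj) φ e⟩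
    · exfalso
      obtain ⟨φ⟩ := hiso
      have h1 : (false : Bool) = p.1 := by rw [← hlab]; exact φ.lab_eq e
      rw [hp1] at h1
      exact Bool.false_ne_true h1

theorem exists_derivation (F : Set (Function.End ℕ)) (hFfin : F.Finite)
    (hF : ∀ f ∈ F, ∀ j ∈ Finset.Icc 1 n, f j ∈ Finset.Icc 1 n)
    (l : List (Function.End ℕ)) (hl : ∀ f ∈ l, f ∈ F)
    (hh : ∀ j ∈ Finset.Icc 1 n, l.prod j ∈ Finset.Icc 1 n) :
    ∃ H', Derives (GF n F hFfin hF) (handle true) H' ∧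
      IsIso H' (Fgraph true n rfl l.prod hh) := by
  induction l using List.reverseRecOn with
  | nil =>
    refine ⟨handle true, Relation.ReflTransGen.refl, ?_⟩
    rw [handle_true_eq]
    exact ⟨HIso.refl _⟩
  | append_singleton l f ihl =>
    have hl' : ∀ g ∈ l, g ∈ F := fun g hg => hl g (List.mem_append_left _ hg)
    have hfF : f ∈ F := hl f (List.mem_append_right _ (List.mem_singleton_self f))
    have hlb : ∀ j ∈ Finset.Icc 1 n, l.prod j ∈ Finset.Icc 1 n :=
      closure_bound hF (Submonoid.list_prod_mem _ (fun g hg => Submonoid.subset_closure (hl' g hg)))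
    obtain ⟨H', hd, ⟨φ⟩⟩ := ihl hl' hlb
    set e : H'.E := φ.eE.symm PUnit.unit with he
    have hlabe : H'.lab e = true := by
      have := φ.lab_eq e
      exact this.symm
    refine ⟨replace H' e (Fgraph true n rfl f (hF f hfF)),
      Relation.ReflTransGen.tail hd
        ⟨e, (true, Fgraph true n rfl f (hF f hfF)),
          Or.inl ⟨⟨f, hF f hfF⟩, hfF, rfl⟩, hlabe, rfl⟩, ?_⟩
    have hprod : (l ++ [f]).prod = l.prod * f := by simp
    have hkey := keyIso (Y := true) (hg := hF f hfF) φ e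
    have heq : (Fgraph true n rfl (l ++ [f]).prod hh :
        Hypergraph Bool (fun _ => Finset.Icc 1 n)) =
        Fgraph true n rfl (fun j => l.prod (f j)) (fun j hj => hlb _ (hF f hfF j hj)) :=
      Fgraph_congr (by rw [hprod]; rfl)
    rw [heq]
    exact ⟨hkey⟩

end Key

/-- `L(G(𝓕)) = {F(a, h) ∣ h ∈ ⟨𝓕⟩}`, where `⟨𝓕⟩` is the submonoid of the
monoid of transformations generated by `𝓕`. -/
theorem stmt_1 (n : ℕ) (hn : 1 ≤ n) (F : Set (Function.End ℕ)) (hFfin : F.Finite)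
    (hF : ∀ f ∈ F, ∀ j ∈ Finset.Icc 1 n, f j ∈ Finset.Icc 1 n) :
    Lang (GF n F hFfin hF) =
      {H | ∃ h ∈ Submonoid.closure F,
        ∃ hh : ∀ j ∈ Finset.Icc 1 n, h j ∈ Finset.Icc 1 n,
          IsIso H (Fgraph false n rfl h hh)} := by
  ext H
  constructor
  · rintro ⟨hterm, H', hd, ⟨ψ⟩⟩
    obtain ⟨h, hcl, hh, hiso⟩ := derives_inv F hFfin hF hd
    rcases hiso with hiso | hiso
    · exfalso
      obtain ⟨φ⟩ := hiso
      have hlab := φ.lab_eq (φ.eE.symm PUnit.unit)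
      have hlab2 := ψ.lab_eq (φ.eE.symm PUnit.unit)
      exact hterm (ψ.eE (φ.eE.symm PUnit.unit)) (by rw [hlab2, ← hlab]; rfl)
    · obtain ⟨φ⟩ := hiso
      exact ⟨h, hcl, hh, ⟨ψ.symm.trans φ⟩⟩
  · rintro ⟨h, hcl, hh, ⟨ψ⟩⟩
    obtain ⟨l, hlF, hlprod⟩ := Submonoid.exists_list_of_mem_closure hcl
    subst hlprod
    constructor
    · intro e hNT
      have hlab := ψ.lab_eq e
      exact Bool.false_ne_true (hlab.trans hNT)
    · obtain ⟨H', hd, ⟨φ⟩⟩ := exists_derivation F hFfin hF l hlF hh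
      set e := φ.eE.symm PUnit.unit with he
      have hlabe : H'.lab e = true := (φ.lab_eq e).symm
      refine ⟨replace H' e (handle false),
        Relation.ReflTransGen.tail hd
          ⟨e, (true, handle false), Or.inr rfl, hlabe, rfl⟩, ?_⟩
      have hkey := keyIso (Y := false) (hg := fun _ hj => hj) φ e
      have hkey' : HIso (replace H' e (handle false))
          (Fgraph false n rfl (fun j => l.prod ((1 : Function.End ℕ) j))
            (fun j hj => hh _ hj)) := by
        rw [handle_false_eq]
        exact hkey
      exact ⟨hkey'.trans ψ.symm⟩

end HRGPaper
end

section
/- For every multiple context-free grammar (MCFG) G = (N, {a}, F, P, S) over the one-letter terminal alphabet {a} there exists a linear context-free rewriting system (LCFRS) G̃ over the terminal alphabet {a,b}, with nonterminal set N ∪ {S̃} and dimensions dim̃(A) = dim(A) + 1 for A ∈ N and dim̃(S̃) = 1, such that for every A ∈ N the set obtained from yield_{G̃}(A) by deleting the last component of every tuple equals yield_G(A). Consequently, ε ∈ L(G) if and only if some word of L(G̃) begins with b, i.e. L(G̃) ∩ b{a,b}* ≠ ∅. -/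
namespace HRGPaper

universe u

variable {C : Type u} {tc : C → Finset ℕ}

universe v w

/-- A rule of a multiple context-free grammar, given syntactically: the `i`-th component of the
output is a list of symbols, each being a terminal or a variable `x_{p,q}` referring to the
`q`-th component of the `p`-th argument nonterminal.  The field `linear` is the mcf-condition
that every variable occurs at most once in the output. -/
structure MCFGRule (N : Type v) (T : Type w) (dim : N → ℕ) where
  lhs : N
  args : List N
  out : Fin (dim lhs) → List (T ⊕ (Σ p : Fin args.length, Fin (dim (args.get p))))
  linear : ((List.ofFn out).flatten.filterMap Sum.getRight?).Nodup

/-- The list of (occurrences of) variables in the output of an MCFG rule. -/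
def MCFGRule.varList {N : Type v} {T : Type w} {dim : N → ℕ} (r : MCFGRule N T dim) :
    List (Σ p : Fin r.args.length, Fin (dim (r.args.get p))) :=
  (List.ofFn r.out).flatten.filterMap Sum.getRight?

/-- Evaluation of the mcf-function of an MCFG rule on a tuple of argument tuples. -/
def MCFGRule.eval {N : Type v} {T : Type w} {dim : N → ℕ} (r : MCFGRule N T dim)
    (τ : (p : Fin r.args.length) → Fin (dim (r.args.get p)) → List T) :
    Fin (dim r.lhs) → List T :=
  fun i => ((r.out i).map (Sum.elim (fun t => [t]) (fun v => τ v.1 v.2))).flatten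

/-- A multiple context-free grammar with nonterminals `N` (of dimensions `dim`) and
terminal alphabet `T`. -/
structure MCFG (N : Type v) (T : Type w) (dim : N → ℕ) where
  finN : Finite N
  finT : Finite T
  rules : Set (MCFGRule N T dim)
  finRules : rules.Finite
  start : N
  dim_start : dim start = 1

/-- `Yields G A t` means that the tuple `t` belongs to `yield_G(A)`. -/
inductive Yields {N : Type v} {T : Type w} {dim : N → ℕ} (G : MCFG N T dim) :
    (A : N) → (Fin (dim A) → List T) → Prop
  | step (r : MCFGRule N T dim) (hr : r ∈ G.rules)
      (τ : (p : Fin r.args.length) → Fin (dim (r.args.get p)) → List T)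
      (ih : ∀ p, Yields G (r.args.get p) (τ p)) :
      Yields G r.lhs (r.eval τ)

/-- The language of an MCFG. -/
def MCFG.lang {N : Type v} {T : Type w} {dim : N → ℕ} (G : MCFG N T dim) : Set (List T) :=
  {w | ∃ t : Fin (dim G.start) → List T, Yields G G.start t ∧ ∀ i, t i = w}

/-- An MCFG is an LCFRS if each of its rules uses every variable (hence, by `linear`,
exactly once): the information-lossless condition. -/
def MCFG.IsLCFRS {N : Type v} {T : Type w} {dim : N → ℕ} (G : MCFG N T dim) : Prop :=
  ∀ r ∈ G.rules, ∀ v : (Σ p : Fin r.args.length, Fin (dim (r.args.get p))), v ∈ r.varList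

/-- The size of an MCFG rule: the number of symbols in it. -/
def MCFGRule.size {N : Type v} {T : Type w} {dim : N → ℕ} (r : MCFGRule N T dim) : ℕ :=
  1 + r.args.length + ∑ i : Fin (dim r.lhs), (1 + (r.out i).length)

/-- The size of an MCFG: the total number of symbols in its rules. -/
noncomputable def MCFG.size {N : Type v} {T : Type w} {dim : N → ℕ} (G : MCFG N T dim) : ℕ :=
  ∑ r ∈ G.finRules.toFinset, r.size

section Stmt5Aux

variable {N : Type} {dim : N → ℕ}

/-- The extended dimension map. -/
def dim' (dim : N → ℕ) : Option N → ℕ := fun A => Option.elim A 1 (fun B => dim B + 1)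

namespace Stmt5

lemma len_eq (r : MCFGRule N Unit dim) : (r.args.map some).length = r.args.length :=
  List.length_map _

lemma get_map_some (r : MCFGRule N Unit dim) (p : Fin (r.args.map some).length) :
    (r.args.map some).get p = some (r.args.get (Fin.cast (len_eq r) p)) := by
  simp [List.get_eq_getElem]

lemma dim_get (r : MCFGRule N Unit dim) (p : Fin (r.args.map some).length) :
    dim' dim ((r.args.map some).get p) = dim (r.args.get (Fin.cast (len_eq r) p)) + 1 := by
  rw [get_map_some]; rfl

/-- The translation of variables. -/
def trVar (r : MCFGRule N Unit dim)
    (v : Σ p : Fin r.args.length, Fin (dim (r.args.get p))) :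
    Σ p : Fin (r.args.map some).length, Fin (dim' dim ((r.args.map some).get p)) :=
  ⟨Fin.cast (len_eq r).symm v.1, Fin.cast (dim_get r _).symm v.2.castSucc⟩

lemma trVar_injective (r : MCFGRule N Unit dim) : Function.Injective (trVar r) := by
  rintro ⟨p, q⟩ ⟨p', q'⟩ h
  have h1 : p.val = p'.val := congrArg (fun v => v.1.val) h
  have hp : p = p' := Fin.ext h1
  subst hp
  have h2 : q.val = q'.val := congrArg (fun v => (v.2 : ℕ)) h
  exact congrArg _ (Fin.ext h2)

/-- The extra variables going into the last component. -/
noncomputable def extraVars (r : MCFGRule N Unit dim) :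
    List (Σ p : Fin (r.args.map some).length, Fin (dim' dim ((r.args.map some).get p))) :=
  (Finset.univ.toList).filter (fun v => decide (v ∉ r.varList.map (trVar r)))

/-- The output function of the translated rule. -/
noncomputable def trOut (r : MCFGRule N Unit dim) :
    Fin (dim r.lhs + 1) →
      List (Bool ⊕ Σ p : Fin (r.args.map some).length,
        Fin (dim' dim ((r.args.map some).get p))) := fun i =>
  if h : (i : ℕ) < dim r.lhs then
    (r.out ⟨i, h⟩).map (Sum.map (fun _ => false) (trVar r))
  else (extraVars r).map Sum.inr

lemma trOut_castSucc (r : MCFGRule N Unit dim) (i : Fin (dim r.lhs)) :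
    trOut r i.castSucc = (r.out i).map (Sum.map (fun _ => false) (trVar r)) := by
  have h : ((i.castSucc : Fin (dim r.lhs + 1)) : ℕ) < dim r.lhs := i.isLt
  rw [trOut, dif_pos h]
  rfl

lemma trOut_last (r : MCFGRule N Unit dim) :
    trOut r (Fin.last _) = (extraVars r).map Sum.inr := by
  rw [trOut, dif_neg]; simp

lemma filterMap_getRight?_map_sumMap {α β α' β' : Type*} (f : α → α') (g : β → β')
    (l : List (α ⊕ β)) :
    ((l.map (Sum.map f g)).filterMap Sum.getRight?) = (l.filterMap Sum.getRight?).map g := by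
  induction l with
  | nil => rfl
  | cons x l ih => cases x <;> simp_all [List.filterMap_cons]

lemma filterMap_getRight?_map_inr {α β : Type*} (l : List β) :
    ((l.map (Sum.inr : β → α ⊕ β)).filterMap Sum.getRight?) = l := by
  induction l with
  | nil => rfl
  | cons x l ih => simp_all [Sum.getRight?]

lemma trOut_varList (r : MCFGRule N Unit dim) :
    (List.ofFn (trOut r)).flatten.filterMap Sum.getRight?
      = r.varList.map (trVar r) ++ extraVars r := by
  rw [List.ofFn_succ' (trOut r), List.concat_eq_append, List.flatten_append,
    List.filterMap_append]
  congr 1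
  · have h1 : (fun i : Fin (dim r.lhs) => trOut r i.castSucc)
        = fun i => (r.out i).map (Sum.map (fun _ => false) (trVar r)) :=
      funext (trOut_castSucc r)
    rw [h1, show (List.ofFn fun i => (r.out i).map (Sum.map (fun _ => false) (trVar r)))
        = (List.ofFn r.out).map (List.map (Sum.map (fun _ => false) (trVar r)))
      from (List.map_ofFn).symm, ← List.map_flatten, filterMap_getRight?_map_sumMap]
    rfl
  · rw [trOut_last]
    simp only [List.flatten, List.append_nil]
    exact (congrArg (List.filterMap Sum.getRight?) (List.append_nil _)).trans (filterMap_getRight?_map_inr _)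

/-- The translated rule. -/
noncomputable def tr (r : MCFGRule N Unit dim) : MCFGRule (Option N) Bool (dim' dim) where
  lhs := some r.lhs
  args := r.args.map some
  out := trOut r
  linear := by
    refine (congrArg List.Nodup (show ((List.ofFn (trOut r)).flatten.filterMap Sum.getRight?)
        = r.varList.map (trVar r) ++ extraVars r from trOut_varList r)).mpr ?_
    refine List.Nodup.append (r.linear.map (trVar_injective r))
      ((Finset.nodup_toList _).filter _) ?_
    intro v hv hv'
    have := List.of_mem_filter hv'
    simp only [decide_eq_true_eq] at this
    exact this hv

lemma tr_varList (r : MCFGRule N Unit dim) :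
    (tr r).varList = r.varList.map (trVar r) ++ extraVars r := trOut_varList r

lemma tr_lossless (r : MCFGRule N Unit dim)
    (v : Σ p : Fin (tr r).args.length, Fin (dim' dim ((tr r).args.get p))) :
    v ∈ (tr r).varList := by
  rw [tr_varList]; refine List.mem_append.mpr ?_
  by_cases hv : v ∈ r.varList.map (trVar r)
  · exact Or.inl hv
  · exact Or.inr (List.mem_filter.mpr
      ⟨Finset.mem_toList.mpr (Finset.mem_univ v), by simp only [decide_eq_true_eq]; exact hv⟩)

variable (G : MCFG N Unit dim)

lemma start_pos : 0 < dim G.start := by rw [G.dim_start]; exact Nat.one_pos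

/-- Selector names for the start rule. -/
def p0 : Fin ([some G.start].length) := ⟨0, Nat.one_pos⟩
def q0 : Fin (dim' dim (some G.start)) := ⟨0, Nat.succ_pos _⟩
def q1 : Fin (dim' dim (some G.start)) := ⟨1, Nat.succ_lt_succ (start_pos G)⟩

/-- The start rule of the translated grammar. -/
def rS : MCFGRule (Option N) Bool (dim' dim) where
  lhs := none
  args := [some G.start]
  out := fun _ => [Sum.inr ⟨p0 G, q0 G⟩, Sum.inl true, Sum.inr ⟨p0 G, q1 G⟩]
  linear := by
    have hne : (⟨p0 G, q0 G⟩ : Σ p : Fin ([some G.start].length),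
        Fin (dim' dim ([some G.start].get p))) ≠ ⟨p0 G, q1 G⟩ := by
      intro h
      have : (q0 G).val = (q1 G).val := congrArg (fun v => (v.2 : ℕ)) h
      simp [q0, q1] at this
    rw [show (List.ofFn fun _ : Fin (dim' dim none) =>
        [Sum.inr ⟨p0 G, q0 G⟩, Sum.inl true,
          (Sum.inr ⟨p0 G, q1 G⟩ : Bool ⊕ Σ p : Fin ([some G.start].length),
            Fin (dim' dim ([some G.start].get p)))])
      = [[Sum.inr ⟨p0 G, q0 G⟩, Sum.inl true, Sum.inr ⟨p0 G, q1 G⟩]] from rfl]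
    simp [Sum.getRight?, hne, hne.symm, List.filterMap_cons]

lemma rS_varList : (rS G).varList = [⟨p0 G, q0 G⟩, ⟨p0 G, q1 G⟩] := by
  rfl

lemma rS_lossless (v : Σ p : Fin (rS G).args.length, Fin (dim' dim ((rS G).args.get p))) :
    v ∈ (rS G).varList := by
  obtain ⟨p, q⟩ := v
  have hp : p = p0 G := Fin.ext (Nat.lt_one_iff.mp p.isLt)
  subst hp
  rw [rS_varList]
  have hq : q.val < dim G.start + 1 := q.isLt
  rw [G.dim_start] at hq
  rcases Nat.lt_succ_iff_lt_or_eq.mp hq with h | h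
  · have : q = q0 G := Fin.ext (Nat.lt_one_iff.mp h)
    rw [this]; exact List.mem_cons_self
  · have : q = q1 G := Fin.ext h
    rw [this]; simp

/-- The translated grammar. -/
noncomputable def trG : MCFG (Option N) Bool (dim' dim) where
  finN := by haveI := G.finN; exact Finite.of_equiv (N ⊕ PUnit.{1}) (Equiv.optionEquivSumPUnit N).symm
  finT := inferInstance
  rules := insert (rS G) (tr '' G.rules)
  finRules := (G.finRules.image _).insert _
  start := none
  dim_start := rfl

lemma trG_lcfrs : (trG G).IsLCFRS := by
  intro r' hr' v
  rcases Set.mem_insert_iff.mp hr' with h | ⟨r, hr, rfl⟩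
  · subst h; exact rS_lossless G v
  · exact tr_lossless r v

lemma yields_cast {N' T' : Type} {d' : N' → ℕ} {G' : MCFG N' T' d'} {A B : N'}
    (hAB : A = B) {u : Fin (d' A) → List T'} (h : Yields G' A u) :
    Yields G' B (fun q => u (Fin.cast (by rw [hAB]) q)) := by
  subst hAB; exact h

lemma tr_eval (r : MCFGRule N Unit dim)
    (τ : (p : Fin r.args.length) → Fin (dim (r.args.get p)) → List Unit)
    (τ' : (p : Fin (r.args.map some).length) →
      Fin (dim' dim ((r.args.map some).get p)) → List Bool)
    (hττ' : ∀ v : Σ p : Fin r.args.length, Fin (dim (r.args.get p)),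
      τ' (trVar r v).1 (trVar r v).2 = (τ v.1 v.2).map (fun _ => false))
    (i : Fin (dim r.lhs)) :
    (tr r).eval τ' i.castSucc = (r.eval τ i).map (fun _ => false) := by
  show (List.map _ (trOut r i.castSucc)).flatten = _
  rw [trOut_castSucc, MCFGRule.eval, List.map_flatten, List.map_map]
  erw [List.map_map]
  congr 1
  apply List.map_congr_left
  intro x hx
  cases x with
  | inl u => rfl
  | inr v => exact hττ' v

lemma yields_tr {G : MCFG N Unit dim} {A : N} {s : Fin (dim A) → List Unit}
    (h : Yields G A s) :
    ∃ t' : Fin (dim A + 1) → List Bool, Yields (trG G) (some A) t' ∧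
      ∀ i : Fin (dim A), t' i.castSucc = (s i).map (fun _ => false) := by
  induction h with
  | step r hr τ ih IH =>
    choose t' ht' hproj using IH
    refine ⟨(tr r).eval (fun p q => t' (Fin.cast (len_eq r) p) (Fin.cast (dim_get r p) q)),
      ?_, ?_⟩
    · exact Yields.step (tr r) (Set.mem_insert_iff.mpr (Or.inr (Set.mem_image_of_mem tr hr))) _
        (fun p => yields_cast (get_map_some r p).symm (ht' (Fin.cast (len_eq r) p)))
    · intro i
      exact tr_eval r τ _ (fun v => hproj v.1 v.2) i

lemma trG_yields {G : MCFG N Unit dim} {A' : Option N} {t' : Fin (dim' dim A') → List Bool}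
    (h : Yields (trG G) A' t') :
    (∀ (A : N) (hA : A' = some A),
      ∃ s : Fin (dim A) → List Unit, Yields G A s ∧
        ∀ i : Fin (dim A), t' (Fin.cast (by rw [hA]; rfl) i.castSucc) = (s i).map (fun _ => false))
    ∧ (A' = none →
      ∃ (s : Fin (dim G.start) → List Unit) (v : List Bool),
        Yields G G.start s ∧
        ∀ j : Fin (dim' dim A'),
          t' j = (s ⟨0, start_pos G⟩).map (fun _ => false) ++ true :: v) := by
  induction h with
  | step r' hr' τ' ih IH =>
    rcases Set.mem_insert_iff.mp hr' with hrS | ⟨r, hr, hrr⟩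
    · subst hrS
      constructor
      · rintro A hA; exact absurd hA (by simp [rS])
      · intro _
        obtain ⟨s, hs, hproj⟩ := (IH (p0 G)).1 G.start rfl
        refine ⟨s, τ' (p0 G) (q1 G), hs, ?_⟩
        intro j
        have h0 : τ' (p0 G) (q0 G) = (s ⟨0, start_pos G⟩).map (fun _ => false) :=
          hproj ⟨0, start_pos G⟩
        show MCFGRule.eval (rS G) τ' j = _
        simp only [MCFGRule.eval, rS]
        simp [h0]
    · subst hrr
      constructor
      · intro A hA
        have hAr : A = r.lhs := by
          have : some r.lhs = some A := hA
          exact (Option.some.inj this).symm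
        subst hAr
        choose s hs hproj using fun p : Fin r.args.length =>
          (IH (Fin.cast (len_eq r).symm p)).1 (r.args.get p)
            (get_map_some r (Fin.cast (len_eq r).symm p))
        refine ⟨r.eval s, Yields.step r hr s hs, ?_⟩
        intro i
        exact tr_eval r s τ' (fun v => hproj v.1 v.2) i
      · intro hA
        exact absurd hA (by simp [tr])

lemma rS_eval (G : MCFG N Unit dim)
    (τ' : (p : Fin (rS G).args.length) → Fin (dim' dim ((rS G).args.get p)) → List Bool)
    (j : Fin (dim' dim none)) :
    (rS G).eval τ' j = τ' (p0 G) (q0 G) ++ true :: τ' (p0 G) (q1 G) := by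
  simp [MCFGRule.eval, rS]

end Stmt5
end Stmt5Aux

/-- Every MCFG over the one-letter alphabet `{a}` (here `Unit`) can be turned
into an LCFRS over `{a, b}` (here `Bool`, with `a = false` and `b = true`) with one extra
component per nonterminal (and a fresh start symbol `S̃ = none` of dimension 1), whose yields
project, after deleting the last component, onto the yields of the original grammar;
consequently `ε ∈ L(G)` iff some word of `L(G̃)` begins with `b`. -/
theorem stmt_5 (N : Type) (dim : N → ℕ) (G : MCFG N Unit dim) :
    ∃ G' : MCFG (Option N) Bool (fun A => Option.elim A 1 (fun B => dim B + 1)),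
      G'.IsLCFRS ∧ G'.start = none ∧
      (∀ A : N,
        {t : Fin (dim A) → List Bool |
          ∃ t' : Fin (dim A + 1) → List Bool,
            Yields G' (some A) t' ∧ ∀ i : Fin (dim A), t' i.castSucc = t i}
        = {t : Fin (dim A) → List Bool |
            ∃ s : Fin (dim A) → List Unit,
              Yields G A s ∧ ∀ i : Fin (dim A), t i = (s i).map (fun _ => false)}) ∧
      ((([] : List Unit) ∈ G.lang) ↔ ∃ w ∈ G'.lang, ∃ v : List Bool, w = true :: v) := by
  refine ⟨Stmt5.trG G, Stmt5.trG_lcfrs G, rfl, ?_, ?_⟩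
  · intro A
    ext t
    simp only [Set.mem_setOf_eq]
    constructor
    · rintro ⟨t', ht', hproj⟩
      obtain ⟨s, hs, hproj'⟩ := (Stmt5.trG_yields ht').1 A rfl
      exact ⟨s, hs, fun i => (hproj i).symm.trans (hproj' i)⟩
    · rintro ⟨s, hs, hts⟩
      obtain ⟨t', ht', hp⟩ := Stmt5.yields_tr hs
      exact ⟨t', ht', fun i => (hp i).trans (hts i).symm⟩
  · constructor
    · rintro ⟨t, ht, hte⟩
      obtain ⟨t', ht', hp⟩ := Stmt5.yields_tr ht
      have hyields : Yields (Stmt5.trG G) none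
          ((Stmt5.rS G).eval (fun p q => t' (Fin.cast (by
              rw [show p = Stmt5.p0 G from Fin.ext (Nat.lt_one_iff.mp p.isLt)]; rfl) q))) :=
        Yields.step (Stmt5.rS G) (Set.mem_insert _ _) _
          (fun p => Stmt5.yields_cast (show some G.start = [some G.start].get p by
            rw [show p = Stmt5.p0 G from Fin.ext (Nat.lt_one_iff.mp p.isLt)]
            rfl) ht')
      have h0 : t' (Stmt5.q0 G) = [] := by
        have h1 := hp ⟨0, Stmt5.start_pos G⟩
        rw [hte ⟨0, Stmt5.start_pos G⟩] at h1
        exact h1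
      refine ⟨true :: t' (Stmt5.q1 G), ⟨_, hyields, fun i => ?_⟩, t' (Stmt5.q1 G), rfl⟩
      refine (Stmt5.rS_eval G _ i).trans ?_
      show t' (Stmt5.q0 G) ++ true :: t' (Stmt5.q1 G) = true :: t' (Stmt5.q1 G)
      rw [h0]; rfl
    · rintro ⟨w, ⟨tt, htt, hw⟩, v, rfl⟩
      obtain ⟨s, v', hs, hj⟩ := (Stmt5.trG_yields htt).2 rfl
      have h0 : (true : Bool) :: v
          = (s ⟨0, Stmt5.start_pos G⟩).map (fun _ => false) ++ true :: v' :=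
        (hw ⟨0, Nat.one_pos⟩).symm.trans (hj ⟨0, Nat.one_pos⟩)
      have hnil : s ⟨0, Stmt5.start_pos G⟩ = [] := by
        cases hs0 : s ⟨0, Stmt5.start_pos G⟩ with
        | nil => rfl
        | cons a l => rw [hs0] at h0; simp at h0
      refine ⟨s, hs, fun i => ?_⟩
      have hi : i = ⟨0, Stmt5.start_pos G⟩ := Fin.ext (show i.val = (0 : ℕ) from by
        have h2 := i.isLt; have h3 := G.dim_start; omega)
      rw [hi, hnil]


end HRGPaper
end

section
/- Let Γ = (N, {a}, Σ, P, S) be a string-generating hyperedge replacement grammar over the one-letter terminal alphabet {a} with type(a) = {1,2}, and let G be the context-free (string) grammar with nonterminal set N, single terminal a, start symbol S, and, for each production (A → H) ∈ P, the rule A → lab_H(e_1)⋯lab_H(e_k), where e_1,…,e_k are the hyperedges of H listed in an arbitrary fixed order. Then for every n ≥ 0, SG(a^n) ∈ L(Γ) if and only if a^n ∈ L(G). -/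
namespace HRGPaper

universe u

variable {C : Type u} {tc : C → Finset ℕ}

/-- The symbol (for a context-free string grammar with terminal alphabet `{a} = Unit`)
corresponding to a label of an HRG: nonterminal labels stay nonterminal, terminal labels
become the terminal `a`. -/
noncomputable def toSymbol {C : Type} {tc : C → Finset ℕ} (Γ : HRG C tc) (c : C) :
    Symbol Unit C :=
  letI := Classical.propDecidable (Γ.isNT c)
  if Γ.isNT c then Symbol.nonterminal c else Symbol.terminal ()


section Aux

open Multiset

/-- The multiset of labels of the hyperedges of a hypergraph. -/
noncomputable def labmul {C : Type u} {tc : C → Finset ℕ} (H : Hypergraph C tc) : Multiset C :=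
  ((@Finset.univ H.E (@Fintype.ofFinite H.E H.finE)).val).map H.lab

lemma labmul_def {C : Type u} {tc : C → Finset ℕ} (H : Hypergraph C tc) (i : Fintype H.E) :
    labmul H = ((@Finset.univ H.E i).val).map H.lab := by
  unfold labmul
  rw [Subsingleton.elim (@Fintype.ofFinite H.E H.finE) i]

lemma mem_labmul {C : Type u} {tc : C → Finset ℕ} {H : Hypergraph C tc} {c : C} :
    c ∈ labmul H ↔ ∃ e, H.lab e = c := by
  haveI := H.finE
  haveI i : Fintype H.E := Fintype.ofFinite H.E
  rw [labmul_def H i]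
  simp

lemma card_labmul {C : Type u} {tc : C → Finset ℕ} (H : Hypergraph C tc) (i : Fintype H.E) :
    Multiset.card (labmul H) = @Fintype.card H.E i := by
  rw [labmul_def H i]
  simpa using (Finset.card_univ (α := H.E))

lemma labmul_handle {C : Type u} {tc : C → Finset ℕ} (c : C) :
    labmul (handle (tc := tc) c) = {c} := by
  rw [labmul_def _ (inferInstanceAs (Fintype PUnit))]
  rfl

lemma val_map_eq_sum {α β : Type*} (s : Finset α) (g : α → β) :
    s.val.map g = ∑ a ∈ s, ({g a} : Multiset β) := by
  rw [Finset.sum_eq_multiset_sum]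
  conv_rhs => rw [show (fun a => ({g a} : Multiset β)) = (fun x => ({x} : Multiset β)) ∘ g
    from rfl, ← Multiset.map_map]
  rw [Multiset.sum_map_singleton]

lemma key_sum {α β γ : Type*} [Fintype α] [Fintype β] [DecidableEq α] (e : α)
    (f : α → γ) (g : β → γ) :
    ((Finset.univ.val.map (Sum.elim (fun x : {x : α // x ≠ e} => f x.1) g) : Multiset γ)
        + {f e})
      = Finset.univ.val.map f + Finset.univ.val.map g := by
  rw [val_map_eq_sum, val_map_eq_sum, val_map_eq_sum, Fintype.sum_sum_type]
  simp only [Sum.elim_inl, Sum.elim_inr]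
  have h3 : (∑ x : {x : α // x ≠ e}, ({f x.1} : Multiset γ))
      = ∑ x ∈ Finset.univ.erase e, ({f x} : Multiset γ) :=
    (Finset.sum_subtype (Finset.univ.erase e) (by simp) (fun x => ({f x} : Multiset γ))).symm
  rw [h3, add_right_comm,
    Finset.sum_erase_add Finset.univ (fun x => ({f x} : Multiset γ)) (Finset.mem_univ e)]

lemma labmul_replace {C : Type u} {tc : C → Finset ℕ} (H : Hypergraph C tc) (e : H.E)
    (K : Hypergraph C tc) :
    labmul (replace H e K) + {H.lab e} = labmul H + labmul K := by
  classical
  haveI := H.finE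
  haveI := K.finE
  haveI iH : Fintype H.E := Fintype.ofFinite H.E
  haveI iK : Fintype K.E := Fintype.ofFinite K.E
  rw [labmul_def (replace H e K) (instFintypeSum {e' : H.E // e' ≠ e} K.E),
    labmul_def H iH, labmul_def K iK]
  exact key_sum e H.lab K.lab

/-- The multiset of symbols of a hypergraph. -/
noncomputable def msym {C : Type} {tc : C → Finset ℕ} (Γ : HRG C tc) (H : Hypergraph C tc) :
    Multiset (Symbol Unit C) :=
  (labmul H).map (toSymbol Γ)

lemma toSymbol_nt {C : Type} {tc : C → Finset ℕ} {Γ : HRG C tc} {c : C} (h : Γ.isNT c) :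
    toSymbol Γ c = Symbol.nonterminal c := by
  simp [toSymbol, h]

lemma toSymbol_t {C : Type} {tc : C → Finset ℕ} {Γ : HRG C tc} {c : C} (h : ¬ Γ.isNT c) :
    toSymbol Γ c = Symbol.terminal () := by
  simp [toSymbol, h]

lemma toSymbol_eq_nonterminal {C : Type} {tc : C → Finset ℕ} {Γ : HRG C tc} {c d : C}
    (h : toSymbol Γ c = Symbol.nonterminal d) : c = d ∧ Γ.isNT c := by
  unfold toSymbol at h
  split_ifs at h with hnt
  exact ⟨by injection h, hnt⟩

lemma toSymbol_ne_terminal {C : Type} {tc : C → Finset ℕ} {Γ : HRG C tc} {c : C}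
    (h : toSymbol Γ c = Symbol.terminal ()) : ¬ Γ.isNT c := by
  intro hnt
  rw [toSymbol_nt hnt] at h
  exact absurd h (by simp)

lemma msym_handle {C : Type} {tc : C → Finset ℕ} (Γ : HRG C tc) :
    msym Γ (handle (tc := tc) Γ.S) = {Symbol.nonterminal Γ.S} := by
  simp [msym, labmul_handle, toSymbol_nt Γ.S_nt]

lemma msym_replace {C : Type} {tc : C → Finset ℕ} (Γ : HRG C tc) (H : Hypergraph C tc)
    (e : H.E) (K : Hypergraph C tc) :
    msym Γ (replace H e K) + {toSymbol Γ (H.lab e)} = msym Γ H + msym Γ K := by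
  have h := congrArg (Multiset.map (toSymbol Γ)) (labmul_replace H e K)
  simpa [Multiset.map_add, msym] using h

lemma coe_enum_output {C : Type} {tc : C → Finset ℕ} (Γ : HRG C tc) (D : Hypergraph C tc)
    (enum : List D.E) (hnd : enum.Nodup) (hall : ∀ e, e ∈ enum) :
    (↑(enum.map (fun e => toSymbol Γ (D.lab e))) : Multiset (Symbol Unit C)) = msym Γ D := by
  haveI := D.finE
  haveI i : Fintype D.E := Fintype.ofFinite D.E
  have huniv : (@Finset.univ D.E i).val = (↑enum : Multiset D.E) := by
    have h : (⟨(↑enum : Multiset D.E), (Multiset.coe_nodup).2 hnd⟩ : Finset D.E)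
        = Finset.univ := Finset.eq_univ_iff_forall.mpr (fun x => Multiset.mem_coe.2 (hall x))
    exact (congrArg Finset.val h).symm
  unfold msym
  rw [labmul_def D i, Multiset.map_map, huniv, Multiset.map_coe]
  rfl

lemma isIso_refl {C : Type u} {tc : C → Finset ℕ} (H : Hypergraph C tc) : IsIso H H :=
  ⟨⟨Equiv.refl _, Equiv.refl _, fun _ => rfl, fun _ _ _ _ => rfl, rfl, fun _ _ _ => rfl⟩⟩

lemma coe_three {α : Type*} (u w v : List α) :
    (↑(u ++ w ++ v) : Multiset α) = ↑u + ↑w + ↑v := by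
  rw [← Multiset.coe_add, ← Multiset.coe_add]

lemma coe_mid {α : Type*} (u v : List α) (x : α) :
    (↑(u ++ x :: v) : Multiset α) = ↑u + {x} + ↑v := by
  rw [← List.singleton_append, ← List.append_assoc]
  rw [coe_three]
  rfl

/-- Direction HRG ⟹ CFG: every derivable hypergraph has a CFG-derivable linearisation. -/
lemma cfg_of_hrg {C : Type} {tc : C → Finset ℕ} (Γ : HRG C tc)
    (R : Finset (ContextFreeRule Unit C))
    (hPR : ∀ p ∈ Γ.P, ∃ r ∈ R, r.input = p.1 ∧
      ∃ enum : List p.2.E, enum.Nodup ∧ (∀ e : p.2.E, e ∈ enum) ∧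
        r.output = enum.map (fun e => toSymbol Γ (p.2.lab e)))
    {H : Hypergraph C tc} (h : Derives Γ (handle Γ.S) H) :
    ∃ l, (ContextFreeGrammar.mk C Γ.S R).Derives [Symbol.nonterminal Γ.S] l ∧
      (↑l : Multiset (Symbol Unit C)) = msym Γ H := by
  induction h with
  | refl =>
    exact ⟨[Symbol.nonterminal Γ.S], Relation.ReflTransGen.refl,
      by rw [msym_handle]; rfl⟩
  | @tail Hm Hc _ hstep ih =>
    obtain ⟨l, hder, hml⟩ := ih
    obtain ⟨e, p, hp, hlabe, rfl⟩ := hstep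
    obtain ⟨r, hr, hri, enum, hnd, hall, hout⟩ := hPR p hp
    have hx : Symbol.nonterminal p.1 ∈ (↑l : Multiset (Symbol Unit C)) := by
      rw [hml]
      exact Multiset.mem_map.2 ⟨Hm.lab e, mem_labmul.2 ⟨e, _root_.rfl⟩,
        by rw [hlabe, toSymbol_nt (Γ.lhs_nt p hp)]⟩
    obtain ⟨u, v, hl⟩ := List.append_of_mem (Multiset.mem_coe.1 hx)
    have hrepr : l = u ++ [Symbol.nonterminal r.input] ++ v := by
      rw [hl, hri]; simp
    refine ⟨u ++ r.output ++ v, Relation.ReflTransGen.tail hder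
      ⟨r, hr, by rw [hrepr]; exact ContextFreeRule.rewrites_of_exists_parts r u v⟩, ?_⟩
    have hout' : (↑r.output : Multiset (Symbol Unit C)) = msym Γ p.2 := by
      rw [hout]; exact coe_enum_output Γ p.2 enum hnd hall
    have hrep := msym_replace Γ Hm e p.2
    rw [hlabe, toSymbol_nt (Γ.lhs_nt p hp)] at hrep
    have hlm : (↑l : Multiset (Symbol Unit C)) = ↑u + {Symbol.nonterminal p.1} + ↑v := by
      rw [hl]; exact coe_mid u v _
    have hcan : (↑(u ++ r.output ++ v) : Multiset (Symbol Unit C))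
        + {Symbol.nonterminal p.1}
        = msym Γ (replace Hm e p.2) + {Symbol.nonterminal p.1} := by
      rw [hrep, ← hml, hlm, coe_three, hout']
      abel
    exact add_right_cancel hcan

/-- Direction CFG ⟹ HRG: every CFG-derivable sentential form is the linearisation of a
derivable hypergraph. -/
lemma hrg_of_cfg {C : Type} {tc : C → Finset ℕ} (Γ : HRG C tc)
    (R : Finset (ContextFreeRule Unit C))
    (hRP : ∀ r ∈ R, ∃ p ∈ Γ.P, r.input = p.1 ∧
      ∃ enum : List p.2.E, enum.Nodup ∧ (∀ e : p.2.E, e ∈ enum) ∧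
        r.output = enum.map (fun e => toSymbol Γ (p.2.lab e)))
    {l : List (Symbol Unit C)}
    (h : (ContextFreeGrammar.mk C Γ.S R).Derives [Symbol.nonterminal Γ.S] l) :
    ∃ H, Derives Γ (handle Γ.S) H ∧ msym Γ H = (↑l : Multiset (Symbol Unit C)) := by
  induction h with
  | refl =>
    exact ⟨handle Γ.S, Relation.ReflTransGen.refl, by rw [msym_handle]; rfl⟩
  | @tail lm lc _ hstep ih =>
    obtain ⟨H, hderH, hmH⟩ := ih
    obtain ⟨r, hr, hrw⟩ := hstep
    obtain ⟨u, v, hlm, hlc⟩ := hrw.exists_parts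
    obtain ⟨p, hp, hri, enum, hnd, hall, hout⟩ := hRP r hr
    have hx : Symbol.nonterminal p.1 ∈ msym Γ H := by
      rw [hmH, hlm, ← hri]
      refine Multiset.mem_coe.2 ?_
      simp
    obtain ⟨c, hc, hcs⟩ := Multiset.mem_map.1 hx
    obtain ⟨e, he⟩ := mem_labmul.1 hc
    obtain ⟨hcp, -⟩ := toSymbol_eq_nonterminal hcs
    have hlabe : H.lab e = p.1 := he.trans hcp
    refine ⟨replace H e p.2, Relation.ReflTransGen.tail hderH ⟨e, p, hp, hlabe, _root_.rfl⟩, ?_⟩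
    have hout' : (↑r.output : Multiset (Symbol Unit C)) = msym Γ p.2 := by
      rw [hout]; exact coe_enum_output Γ p.2 enum hnd hall
    have hrep := msym_replace Γ H e p.2
    rw [hlabe, toSymbol_nt (Γ.lhs_nt p hp)] at hrep
    have hcan : msym Γ (replace H e p.2) + {Symbol.nonterminal p.1}
        = (↑lc : Multiset (Symbol Unit C)) + {Symbol.nonterminal p.1} := by
      rw [hrep, hmH, hlm, hlc, coe_three, coe_three, hout', hri, Multiset.coe_singleton]
      abel
    exact add_right_cancel hcan

end Aux

/-- Let `Γ` be a string-generating HRG over the one-letter terminal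
alphabet `{a}` and let `G` be the context-free grammar obtained by linearisation: its
nonterminals are the labels of `Γ`, its start symbol is `S`, and for each production
`A → H` of `Γ` it has the rule `A → lab(e₁)⋯lab(e_k)` where `e₁,…,e_k` enumerate the
hyperedges of `H` in an arbitrary fixed order.  Then for every `n`,
`SG(aⁿ) ∈ L(Γ)` iff `aⁿ ∈ L(G)`. -/
theorem stmt_12 (C : Type) (tc : C → Finset ℕ) (Γ : HRG C tc) (a : C)
    (hta : tc a = ({1, 2} : Finset ℕ)) (haT : ¬ Γ.isNT a)
    (hterm : ∀ c : C, ¬ Γ.isNT c → c = a)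
    (hsg : IsStringGenerating Γ)
    (R : Finset (ContextFreeRule Unit C))
    (hPR : ∀ p ∈ Γ.P, ∃ r ∈ R, r.input = p.1 ∧
      ∃ enum : List p.2.E, enum.Nodup ∧ (∀ e : p.2.E, e ∈ enum) ∧
        r.output = enum.map (fun e => toSymbol Γ (p.2.lab e)))
    (hRP : ∀ r ∈ R, ∃ p ∈ Γ.P, r.input = p.1 ∧
      ∃ enum : List p.2.E, enum.Nodup ∧ (∀ e : p.2.E, e ∈ enum) ∧
        r.output = enum.map (fun e => toSymbol Γ (p.2.lab e))) :
    ∀ n : ℕ, SG (List.replicate n a) ∈ Lang Γ ↔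
      List.replicate n () ∈ (ContextFreeGrammar.mk C Γ.S R).language := by
  intro n
  constructor
  · rintro ⟨-, H', hder, hiso⟩
    obtain ⟨l, hderl, hml⟩ := cfg_of_hrg Γ R hPR hder
    obtain ⟨φ⟩ := hiso
    haveI := H'.finE
    haveI i : Fintype H'.E := Fintype.ofFinite H'.E
    have ψ : H'.E ≃ Fin ((List.replicate n a).length) := φ.eE
    have hcard : @Fintype.card H'.E i = n := by
      rw [Fintype.card_congr ψ]
      simp
    have hlab : ∀ b ∈ labmul H', b = a := by
      intro b hb
      obtain ⟨e, he⟩ := mem_labmul.1 hb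
      have h2 : H'.lab e = (List.replicate n a).get (φ.eE e) := (φ.lab_eq e).symm
      rw [← he, h2]
      apply List.eq_of_mem_replicate (n := n)
      apply List.get_mem
    have hlm : labmul H' = Multiset.replicate n a := by
      refine Multiset.eq_replicate.2 ⟨?_, hlab⟩
      rw [card_labmul H' i, hcard]
    have hms : msym Γ H' = Multiset.replicate n (Symbol.terminal ()) := by
      rw [msym, hlm, Multiset.map_replicate, toSymbol_t haT]
    rw [ContextFreeGrammar.mem_language_iff]
    have hl : l = List.replicate n (Symbol.terminal ()) := by
      have hco : (↑l : Multiset (Symbol Unit C))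
          = ↑(List.replicate n (Symbol.terminal () : Symbol Unit C)) := by
        rw [hml, hms, Multiset.coe_replicate]
      exact List.perm_replicate.1 (Multiset.coe_eq_coe.1 hco)
    have hmap : List.map Symbol.terminal (List.replicate n ()) = l := by
      rw [hl, List.map_replicate]
    rw [hmap]
    exact hderl
  · intro hmem
    rw [ContextFreeGrammar.mem_language_iff] at hmem
    obtain ⟨H, hderH, hmH⟩ := hrg_of_cfg Γ R hRP hmem
    have hms : msym Γ H = Multiset.replicate n (Symbol.terminal ()) := by
      rw [hmH, List.map_replicate, Multiset.coe_replicate]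
    have hnoNT : ∀ e : H.E, ¬ Γ.isNT (H.lab e) := by
      intro e hnt
      have hmem2 : toSymbol Γ (H.lab e) ∈ msym Γ H :=
        Multiset.mem_map.2 ⟨H.lab e, mem_labmul.2 ⟨e, _root_.rfl⟩, _root_.rfl⟩
      rw [hms] at hmem2
      have h3 := Multiset.eq_of_mem_replicate hmem2
      rw [toSymbol_nt hnt] at h3
      simp at h3
    have hHL : H ∈ Lang Γ := ⟨hnoNT, H, hderH, isIso_refl H⟩
    obtain ⟨w, hw⟩ := hsg H hHL
    obtain ⟨φ⟩ := hw
    haveI := H.finE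
    haveI i : Fintype H.E := Fintype.ofFinite H.E
    have ψ : H.E ≃ Fin w.length := φ.eE
    have hcard : @Fintype.card H.E i = n := by
      have h1 := congrArg Multiset.card hms
      rw [Multiset.card_replicate] at h1
      rw [msym, Multiset.card_map, card_labmul H i] at h1
      exact h1
    have hwlen : w.length = n := by
      have h1 : @Fintype.card H.E i = Fintype.card (Fin w.length) := Fintype.card_congr ψ
      rw [hcard] at h1
      simpa using h1.symm
    have hwa : w = List.replicate n a := by
      refine List.eq_replicate_iff.2 ⟨hwlen, ?_⟩
      intro b hb
      obtain ⟨k, hk, hkb⟩ := List.mem_iff_getElem.1 hb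
      have h2 : (SG w).lab (φ.eE (φ.eE.symm ⟨k, hk⟩)) = H.lab (φ.eE.symm ⟨k, hk⟩) :=
        φ.lab_eq _
      replace h2 : (SG (tc := tc) w).lab ⟨k, hk⟩ = H.lab (φ.eE.symm ⟨k, hk⟩) :=
        (congrArg (SG (tc := tc) w).lab (φ.eE.apply_symm_apply ⟨k, hk⟩)).symm.trans h2
      have h3 : w.get ⟨k, hk⟩ = (SG (tc := tc) w).lab ⟨k, hk⟩ := rfl
      have h4 : H.lab (φ.eE.symm ⟨k, hk⟩) = a := hterm _ (hnoNT _)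
      rw [← hkb]
      show w.get ⟨k, hk⟩ = a
      rw [h3, h2, h4]
    refine ⟨?_, H, hderH, ?_⟩
    · intro e
      have hle : (SG (List.replicate n a)).lab e = a := by
        show (List.replicate n a).get e = a
        apply List.eq_of_mem_replicate (n := n)
        apply List.get_mem
      rw [hle]
      exact haT
    · rw [← hwa]
      exact ⟨φ⟩

end HRGPaper
end
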